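/- Let γ_1, …, γ_n be a family of gamma matrices for signature (s,t) with n = s + t, let τ ∈ I_n, and let C be any ℂ-bilinear form on ℂ^N satisfying C(γ_k ψ1, ψ2) = τ C(ψ1, γ_k ψ2) for every index k and all ψ1, ψ2. Then for all ψ1, ψ2 ∈ ℂ^N: (i) C(Γ ψ1, ψ2) = (−1)^{(n−1)⌊n/2⌋} C(ψ1, Γ ψ2), where Γ is the chirality operator; (ii) for every matrix b in the real linear span of {γ_i γ_j : i ≠ j}, C(b ψ1, ψ2) = −C(ψ1, b ψ2); (iii) for every such b, C(exp(b) ψ1, exp(b) ψ2) = C(ψ1, ψ2), where exp is the matrix exponential. -/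

import Mathlib

open Matrix

/-- A family of gamma matrices for signature `(s, t)`. -/
def IsGammaFamily (s t : ℕ)
    (γ : Fin (s + t) → Matrix (Fin (2 ^ ((s + t) / 2))) (Fin (2 ^ ((s + t) / 2))) ℂ) : Prop :=
  (∀ j k : Fin (s + t),
      γ j * γ k + γ k * γ j
        = (if j = k then (if (j : ℕ) < t then (2 : ℂ) else -2) else 0) • (1 : Matrix _ _ ℂ)) ∧
  (∀ k : Fin (s + t), (γ k)ᴴ = if (k : ℕ) < t then γ k else -(γ k))

/-- The chirality operator `Γ := i ^ ⌊(s - t + 1)/2⌋ • γ₁ ⋯ γₙ` (floor division on `ℤ`). -/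
noncomputable def chirality (s t : ℕ)
    (γ : Fin (s + t) → Matrix (Fin (2 ^ ((s + t) / 2))) (Fin (2 ^ ((s + t) / 2))) ℂ) :
    Matrix (Fin (2 ^ ((s + t) / 2))) (Fin (2 ^ ((s + t) / 2))) ℂ :=
  (Complex.I ^ (Int.fdiv ((s : ℤ) - (t : ℤ) + 1) 2)) • (List.ofFn γ).prod

/-- Membership in the set `I_n`. -/
def MemI (n : ℕ) (τ : ℂ) : Prop :=
  if Even n then τ = 1 ∨ τ = -1 else τ = (-1 : ℂ) ^ ((n - 1) / 2)



section AuxLemmas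

variable {N : Type*} [Fintype N] [DecidableEq N]

/-- Move a product of matrices across a bilinear form, one factor at a time. -/
lemma aux_list_move (C : (N → ℂ) →ₗ[ℂ] (N → ℂ) →ₗ[ℂ] ℂ) (τ : ℂ) :
    ∀ (l : List (Matrix N N ℂ)),
      (∀ A ∈ l, ∀ ψ₁ ψ₂, C (A *ᵥ ψ₁) ψ₂ = τ * C ψ₁ (A *ᵥ ψ₂)) →
      ∀ ψ₁ ψ₂ : N → ℂ,
        C (l.prod *ᵥ ψ₁) ψ₂ = τ ^ l.length * C ψ₁ (l.reverse.prod *ᵥ ψ₂) := by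
  intro l
  induction l with
  | nil => intro _ ψ₁ ψ₂; simp [Matrix.one_mulVec]
  | cons a l ih =>
      intro h ψ₁ ψ₂
      have ha := h a (List.mem_cons_self)
      have hl : ∀ A ∈ l, ∀ ψ₁ ψ₂, C (A *ᵥ ψ₁) ψ₂ = τ * C ψ₁ (A *ᵥ ψ₂) :=
        fun A hA => h A (List.mem_cons_of_mem a hA)
      rw [List.prod_cons, ← Matrix.mulVec_mulVec, ha, ih hl,
        List.reverse_cons, List.prod_append, List.prod_singleton,
        ← Matrix.mulVec_mulVec, List.length_cons]
      ring

/-- Pushing one anticommuting matrix through a product. -/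
lemma aux_push_through (a : Matrix N N ℂ) :
    ∀ (l : List (Matrix N N ℂ)), (∀ B ∈ l, a * B = -(B * a)) →
      l.prod * a = (-1 : ℂ) ^ l.length • (a * l.prod) := by
  intro l
  induction l with
  | nil => simp
  | cons B l ih =>
      intro h
      have hB : a * B = -(B * a) := h B (List.mem_cons_self)
      have hl := ih (fun A hA => h A (List.mem_cons_of_mem B hA))
      have hBa : B * a = -(a * B) := by rw [hB, neg_neg]
      have key : B * (a * l.prod) = -(a * (B * l.prod)) := by
        rw [← mul_assoc, hBa, neg_mul, mul_assoc]
      rw [List.prod_cons, List.length_cons, mul_assoc, hl, mul_smul_comm,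
        pow_succ, key, smul_neg, mul_neg_one, neg_smul]

/-- Reversing a product of pairwise anticommuting matrices. -/
lemma aux_reverse_prod :
    ∀ (l : List (Matrix N N ℂ)), l.Pairwise (fun A B => A * B = -(B * A)) →
      l.reverse.prod = (-1 : ℂ) ^ (l.length.choose 2) • l.prod := by
  intro l
  induction l with
  | nil => simp
  | cons a l ih =>
      intro h
      rw [List.pairwise_cons] at h
      obtain ⟨ha, hl⟩ := h
      rw [List.reverse_cons, List.prod_append, List.prod_singleton, ih hl,
        Matrix.smul_mul, aux_push_through a l ha, List.prod_cons,
        List.length_cons, smul_smul, ← pow_add]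
      congr 1
      rw [Nat.choose_succ_succ, Nat.choose_one_right, Nat.add_comm]

end AuxLemmas

section ExpAux

lemma aux_exp_flip {𝔸 : Type*} [NormedRing 𝔸] [NormedAlgebra ℂ 𝔸] [CompleteSpace 𝔸]
    (L R : 𝔸 →L[ℂ] ℂ) (b : 𝔸) (h : ∀ m : ℕ, L (b ^ m) = R ((-b) ^ m)) :
    L (NormedSpace.exp b) = R (NormedSpace.exp (-b)) := by
  simp only [NormedSpace.exp_eq_tsum ℂ]
  rw [L.map_tsum (NormedSpace.expSeries_summable' (𝕂 := ℂ) b),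
    R.map_tsum (NormedSpace.expSeries_summable' (𝕂 := ℂ) (-b))]
  exact tsum_congr fun m => by rw [_root_.map_smul, _root_.map_smul, h m]

lemma aux_matrix_exp_flip {N : Type*} [Fintype N] [DecidableEq N]
    (L R : Matrix N N ℂ →ₗ[ℂ] ℂ) (b : Matrix N N ℂ)
    (h : ∀ m : ℕ, L (b ^ m) = R ((-b) ^ m)) :
    L (NormedSpace.exp b) = R (NormedSpace.exp (-b)) := by
  letI : SeminormedRing (Matrix N N ℂ) := Matrix.linftyOpSemiNormedRing
  letI : NormedRing (Matrix N N ℂ) := Matrix.linftyOpNormedRing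
  letI : NormedAlgebra ℂ (Matrix N N ℂ) := Matrix.linftyOpNormedAlgebra
  exact aux_exp_flip (LinearMap.toContinuousLinearMap L)
    (LinearMap.toContinuousLinearMap R) b h

end ExpAux

/-- if a `ℂ`-bilinear form `C` on `ℂ^N` intertwines Clifford multiplication
with the sign `τ ∈ I_n`, then: (i) `C(Γ ψ₁, ψ₂) = (-1) ^ ((n-1)⌊n/2⌋) C(ψ₁, Γ ψ₂)`;
(ii) `C(b ψ₁, ψ₂) = -C(ψ₁, b ψ₂)` for every `b` in the real span of `{γᵢ γⱼ : i ≠ j}`;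
(iii) `C(exp(b) ψ₁, exp(b) ψ₂) = C(ψ₁, ψ₂)` for every such `b`. -/
theorem majorana_form_properties (s t : ℕ) (hn : 1 ≤ s + t)
    (γ : Fin (s + t) → Matrix (Fin (2 ^ ((s + t) / 2))) (Fin (2 ^ ((s + t) / 2))) ℂ)
    (hγ : IsGammaFamily s t γ) (τ : ℂ) (hτ : MemI (s + t) τ)
    (C : (Fin (2 ^ ((s + t) / 2)) → ℂ) →ₗ[ℂ] (Fin (2 ^ ((s + t) / 2)) → ℂ) →ₗ[ℂ] ℂ)
    (hC : ∀ (k : Fin (s + t)) (ψ₁ ψ₂ : Fin (2 ^ ((s + t) / 2)) → ℂ),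
      C (γ k *ᵥ ψ₁) ψ₂ = τ * C ψ₁ (γ k *ᵥ ψ₂)) :
    (∀ ψ₁ ψ₂ : Fin (2 ^ ((s + t) / 2)) → ℂ,
      C ((chirality s t γ) *ᵥ ψ₁) ψ₂
        = ((-1 : ℂ) ^ ((s + t - 1) * ((s + t) / 2))) * C ψ₁ ((chirality s t γ) *ᵥ ψ₂)) ∧
    (∀ b ∈ Submodule.span ℝ
        {M : Matrix (Fin (2 ^ ((s + t) / 2))) (Fin (2 ^ ((s + t) / 2))) ℂ |
          ∃ i j : Fin (s + t), i ≠ j ∧ M = γ i * γ j},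
      ∀ ψ₁ ψ₂ : Fin (2 ^ ((s + t) / 2)) → ℂ,
        C (b *ᵥ ψ₁) ψ₂ = -C ψ₁ (b *ᵥ ψ₂)) ∧
    (∀ b ∈ Submodule.span ℝ
        {M : Matrix (Fin (2 ^ ((s + t) / 2))) (Fin (2 ^ ((s + t) / 2))) ℂ |
          ∃ i j : Fin (s + t), i ≠ j ∧ M = γ i * γ j},
      ∀ ψ₁ ψ₂ : Fin (2 ^ ((s + t) / 2)) → ℂ,
        C ((NormedSpace.exp b) *ᵥ ψ₁) ((NormedSpace.exp b) *ᵥ ψ₂) = C ψ₁ ψ₂) := by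
  -- τ² = 1
  have hτ2 : τ * τ = 1 := by
    unfold MemI at hτ
    by_cases h : Even (s + t)
    · rw [if_pos h] at hτ
      rcases hτ with h1 | h1 <;> rw [h1] <;> norm_num
    · rw [if_neg h] at hτ
      rw [hτ, ← pow_add]
      exact Even.neg_one_pow ⟨(s + t - 1) / 2, rfl⟩
  -- anticommutation for distinct indices
  have hanti : ∀ i j : Fin (s + t), i ≠ j → γ i * γ j = -(γ j * γ i) := by
    intro i j hij
    have h := hγ.1 i j
    rw [if_neg hij, zero_smul] at h
    exact eq_neg_of_add_eq_zero_left h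
  -- part (ii) for generators
  have hpair : ∀ i j : Fin (s + t), i ≠ j →
      ∀ ψ₁ ψ₂ : Fin (2 ^ ((s + t) / 2)) → ℂ,
        C ((γ i * γ j) *ᵥ ψ₁) ψ₂ = -C ψ₁ ((γ i * γ j) *ᵥ ψ₂) := by
    intro i j hij ψ₁ ψ₂
    rw [← Matrix.mulVec_mulVec, hC, hC, Matrix.mulVec_mulVec, hanti j i (Ne.symm hij),
      Matrix.neg_mulVec, map_neg, mul_neg, mul_neg, ← mul_assoc, hτ2, one_mul]
  -- part (ii) in full
  have part2 : ∀ b ∈ Submodule.span ℝ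
      {M : Matrix (Fin (2 ^ ((s + t) / 2))) (Fin (2 ^ ((s + t) / 2))) ℂ |
        ∃ i j : Fin (s + t), i ≠ j ∧ M = γ i * γ j},
      ∀ ψ₁ ψ₂ : Fin (2 ^ ((s + t) / 2)) → ℂ,
        C (b *ᵥ ψ₁) ψ₂ = -C ψ₁ (b *ᵥ ψ₂) := by
    intro b hb
    induction hb using Submodule.span_induction with
    | mem x hx =>
        obtain ⟨i, j, hij, rfl⟩ := hx
        exact hpair i j hij
    | zero => intro ψ₁ ψ₂; simp [Matrix.zero_mulVec]
    | add x y hx hy ihx ihy =>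
        intro ψ₁ ψ₂
        rw [Matrix.add_mulVec, Matrix.add_mulVec, map_add, LinearMap.add_apply, map_add,
          ihx, ihy, neg_add]
    | smul r x hx ihx =>
        intro ψ₁ ψ₂
        rw [Matrix.smul_mulVec, Matrix.smul_mulVec,
          LinearMap.map_smul_of_tower, LinearMap.smul_apply,
          LinearMap.map_smul_of_tower, ihx, smul_neg]
  -- sign identity
  have hsign : τ ^ (s + t) * (-1 : ℂ) ^ ((s + t).choose 2)
      = (-1 : ℂ) ^ ((s + t - 1) * ((s + t) / 2)) := by
    rcases Nat.even_or_odd (s + t) with he | ho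
    · obtain ⟨m, hm⟩ := he
      have h1 : τ ^ (s + t) = 1 := by
        rw [hm, ← two_mul, pow_mul, pow_two, hτ2, one_pow]
      have h2 : (s + t).choose 2 = (s + t - 1) * ((s + t) / 2) := by
        rw [Nat.choose_two_right]
        have hd : (s + t) / 2 = m := by omega
        have hmul : (s + t) * (s + t - 1) = 2 * (m * (s + t - 1)) := by
          rw [hm]; ring
        rw [hmul, Nat.mul_div_cancel_left _ (by norm_num : 0 < 2), hd, Nat.mul_comm]
      rw [h1, one_mul, h2]
    · obtain ⟨m, hm⟩ := ho
      have hτm : τ = (-1 : ℂ) ^ m := by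
        unfold MemI at hτ
        rw [if_neg (Nat.not_even_iff_odd.mpr ⟨m, hm⟩)] at hτ
        rw [hτ]
        congr 1
        omega
      have h1 : τ ^ (s + t) * (-1 : ℂ) ^ ((s + t).choose 2) = 1 := by
        rw [hτm, ← pow_mul, Nat.choose_two_right]
        have hc : (s + t) * (s + t - 1) / 2 = (s + t) * m := by
          have e1 : s + t - 1 = 2 * m := by omega
          rw [e1]
          have : (s + t) * (2 * m) = 2 * ((s + t) * m) := by ring
          rw [this, Nat.mul_div_cancel_left _ (by norm_num : 0 < 2)]
        rw [hc, ← pow_add]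
        have : m * (s + t) + (s + t) * m = 2 * ((s + t) * m) := by ring
        rw [this, pow_mul, neg_one_sq, one_pow]
      have h2 : (-1 : ℂ) ^ ((s + t - 1) * ((s + t) / 2)) = 1 := by
        have : (s + t - 1) * ((s + t) / 2) = 2 * (m * m) := by
          have e1 : s + t - 1 = 2 * m := by omega
          have e2 : (s + t) / 2 = m := by omega
          rw [e1, e2]; ring
        rw [this, pow_mul, neg_one_sq, one_pow]
      rw [h1, h2]
  refine ⟨?_, part2, ?_⟩
  · -- part (i)
    intro ψ₁ ψ₂
    have hmem : ∀ A ∈ List.ofFn γ, ∀ ψ₁ ψ₂ : Fin (2 ^ ((s + t) / 2)) → ℂ,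
        C (A *ᵥ ψ₁) ψ₂ = τ * C ψ₁ (A *ᵥ ψ₂) := by
      intro A hA
      rw [List.mem_ofFn] at hA
      obtain ⟨k, rfl⟩ := hA
      exact hC k
    have hpw : (List.ofFn γ).Pairwise (fun A B => A * B = -(B * A)) := by
      rw [List.pairwise_ofFn]
      intro i j hij
      exact hanti i j (Fin.ne_of_lt hij)
    have hrev := aux_reverse_prod (List.ofFn γ) hpw
    have hlen : (List.ofFn γ).length = s + t := List.length_ofFn
    simp only [chirality]
    rw [Matrix.smul_mulVec, _root_.map_smul, LinearMap.smul_apply,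
      aux_list_move C τ (List.ofFn γ) hmem ψ₁ ψ₂, hrev, hlen,
      Matrix.smul_mulVec, _root_.map_smul, Matrix.smul_mulVec, _root_.map_smul,
      smul_eq_mul, smul_eq_mul, smul_eq_mul]
    linear_combination
      (Complex.I ^ (Int.fdiv ((s : ℤ) - (t : ℤ) + 1) 2) *
        C ψ₁ ((List.ofFn γ).prod *ᵥ ψ₂)) * hsign
  · -- part (iii)
    intro b hb ψ₁ ψ₂
    have h2 := part2 b hb
    have hpow : ∀ (m : ℕ) (ψ₁ ψ₂ : Fin (2 ^ ((s + t) / 2)) → ℂ),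
        C (b ^ m *ᵥ ψ₁) ψ₂ = C ψ₁ ((-b) ^ m *ᵥ ψ₂) := by
      intro m
      induction m with
      | zero => intro ψ₁ ψ₂; simp [Matrix.one_mulVec]
      | succ m ih =>
          intro ψ₁ ψ₂
          rw [pow_succ', ← Matrix.mulVec_mulVec, h2, ih, Matrix.mulVec_mulVec,
            pow_succ, mul_neg, Matrix.neg_mulVec, map_neg]
    have key : ∀ φ : Fin (2 ^ ((s + t) / 2)) → ℂ,
        C (NormedSpace.exp b *ᵥ ψ₁) φ = C ψ₁ (NormedSpace.exp (-b) *ᵥ φ) := by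
      intro φ
      let L : Matrix (Fin (2 ^ ((s + t) / 2))) (Fin (2 ^ ((s + t) / 2))) ℂ →ₗ[ℂ] ℂ :=
        { toFun := fun M => C (M *ᵥ ψ₁) φ
          map_add' := fun M M' => by
            simp only [Matrix.add_mulVec, map_add, LinearMap.add_apply]
          map_smul' := fun c M => by
            simp only [Matrix.smul_mulVec, _root_.map_smul, LinearMap.smul_apply,
              RingHom.id_apply, smul_eq_mul] }
      let R : Matrix (Fin (2 ^ ((s + t) / 2))) (Fin (2 ^ ((s + t) / 2))) ℂ →ₗ[ℂ] ℂ :=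
        { toFun := fun M => C ψ₁ (M *ᵥ φ)
          map_add' := fun M M' => by simp only [Matrix.add_mulVec, map_add]
          map_smul' := fun c M => by
            simp only [Matrix.smul_mulVec, _root_.map_smul, RingHom.id_apply,
              smul_eq_mul] }
      exact aux_matrix_exp_flip L R b (fun m => hpow m ψ₁ φ)
    rw [key, Matrix.mulVec_mulVec]
    have hone : NormedSpace.exp (-b) * NormedSpace.exp b = 1 := by
      rw [← Matrix.exp_add_of_commute (-b) b ((Commute.refl b).neg_left),
        neg_add_cancel, NormedSpace.exp_zero]
    rw [hone, Matrix.one_mulVec]
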